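/- If G is a cyclically 4-edge-connected cubic graph and G' is obtained from G by an (αβ:γδ)_{uv}-reduction at an edge uv (deleting u and v and adding edges αβ and γδ), then G' is bridgeless. -/

import Mathlib

open SimpleGraph


lemma not_acyclic_of_almost_min_degree_two {W : Type*} [Finite W] (H : SimpleGraph W) (b : W)
    (hdeg : ∀ x : W, x ≠ b → 2 ≤ (H.neighborSet x).ncard) (y : W) (hy : y ≠ b) :
    ¬ H.IsAcyclic := by
  classical
  intro hac
  haveI := Fintype.ofFinite W
  -- set of path lengths
  set P : Set ℕ := {n | ∃ (s t : W) (p : H.Walk s t), p.IsPath ∧ p.length = n} with hP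
  have hbdd : BddAbove P := by
    refine ⟨Fintype.card W, ?_⟩
    rintro n ⟨s, t, p, hp, rfl⟩
    exact (hp.length_lt).le
  -- y has a neighbor
  obtain ⟨c, hc⟩ : (H.neighborSet y).Nonempty := by
    have := hdeg y hy
    exact Set.nonempty_of_ncard_ne_zero (by omega)
  have h1 : 1 ∈ P := by
    refine ⟨y, c, Walk.cons (show H.Adj y c from hc) Walk.nil, ?_, rfl⟩
    rw [Walk.cons_isPath_iff]
    refine ⟨Walk.IsPath.nil, ?_⟩
    simp only [Walk.support_nil, List.mem_singleton]
    exact H.ne_of_adj hc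
  have hPne : P.Nonempty := ⟨1, h1⟩
  set n := sSup P with hn
  have hmem : n ∈ P := Nat.sSup_mem hPne hbdd
  have hmax : ∀ m ∈ P, m ≤ n := fun m hm => le_csSup hbdd hm
  have h1n : 1 ≤ n := hmax 1 h1
  -- key claim
  have key : ∀ (s t : W) (p : H.Walk s t), p.IsPath → p.length = n → s ≠ b → False := by
    intro s t p hp hlen hsb
    cases p with
    | nil => simp at hlen; omega
    | cons h q =>
      rename_i s₁
      rw [Walk.cons_isPath_iff] at hp
      obtain ⟨hq, hs⟩ := hp
      -- s has a neighbor c ≠ s₁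
      obtain ⟨c, hcN, hcs₁⟩ : ∃ c ∈ H.neighborSet s, c ≠ s₁ := by
        by_contra hcon
        push_neg at hcon
        have hsub : H.neighborSet s ⊆ {s₁} := fun z hz => hcon z hz
        have := hdeg s hsb
        have := Set.ncard_le_ncard hsub (Set.finite_singleton _)
        rw [Set.ncard_singleton] at this
        omega
      by_cases hcsup : c ∈ (Walk.cons h q).support
      · -- get a cycle
        have hcs : c ≠ s := fun hcs => H.irrefl (hcs ▸ hcN)
        set q' := (Walk.cons h q).takeUntil c hcsup with hq'
        have hq'path : q'.IsPath := (Walk.cons_isPath_iff h q |>.2 ⟨hq, hs⟩).takeUntil hcsup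
        have hedge : s(c, s) ∉ q'.edges := by
          intro hmem'
          have hsubE := Walk.edges_takeUntil_subset (Walk.cons h q) hcsup
          have : s(c, s) ∈ (Walk.cons h q).edges := hsubE hmem'
          rw [Walk.edges_cons, List.mem_cons] at this
          rcases this with h' | h'
          · rw [Sym2.eq_iff] at h'
            rcases h' with ⟨h1', h2'⟩ | ⟨h1', h2'⟩
            · exact hcs h1'
            · exact hcs₁ h1'
          · exact hs (Walk.snd_mem_support_of_mem_edges q h')
        have hcycle : (Walk.cons (H.mem_neighborSet s c |>.1 hcN).symm q').IsCycle := by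
          rw [Walk.cons_isCycle_iff]
          exact ⟨hq'path, hedge⟩
        exact hac _ hcycle
      · -- extend, contradiction with maximality
        have hadj : H.Adj c s := (H.mem_neighborSet s c |>.1 hcN).symm
        have : (Walk.cons hadj (Walk.cons h q)).length ∈ P :=
          ⟨c, t, _, (Walk.cons_isPath_iff _ _).2 ⟨(Walk.cons_isPath_iff h q).2 ⟨hq, hs⟩, hcsup⟩, rfl⟩
        have h2 := hmax _ this
        rw [Walk.length_cons, Walk.length_cons] at h2
        rw [Walk.length_cons] at hlen
        omega
  -- apply key to the maximal path or its reverse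
  obtain ⟨s, t, p, hp, hlen⟩ := hmem
  by_cases hsb : s ≠ b
  · exact key s t p hp hlen hsb
  · push_neg at hsb
    have hst : s ≠ t := by
      intro h
      subst h
      cases p with
      | nil => simp at hlen; omega
      | cons h' q' =>
        rw [Walk.cons_isPath_iff] at hp
        exact hp.2 (Walk.end_mem_support q')
    exact key t s p.reverse hp.reverse (by simpa using hlen) (by rw [hsb] at hst; exact (Ne.symm hst))



lemma side_not_acyclic {V : Type*} [Fintype V] (G : SimpleGraph V)
    (hcubic : ∀ w : V, (G.neighborSet w).ncard = 3) (T : Set V) (K : Set (Sym2 V))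
    (hK : ∀ x ∈ T, ∀ w : V, G.Adj x w → w ∉ T → s(x, w) ∈ K) (hK3 : K.ncard ≤ 3)
    (hT2 : 2 ≤ T.ncard) : ¬ (G.induce T).IsAcyclic := by
  classical
  -- at most one vertex of T has ≥ 2 neighbours outside T
  have hbad : ∀ x ∈ T, ∀ x' ∈ T, 2 ≤ (G.neighborSet x \ T).ncard →
      2 ≤ (G.neighborSet x' \ T).ncard → x = x' := by
    intro x hx x' hx' h2 h2'
    by_contra hne
    have himg : ∀ z ∈ T, ((fun w => s(z, w)) '' (G.neighborSet z \ T)).ncard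
        = (G.neighborSet z \ T).ncard := by
      intro z hz
      apply Set.ncard_image_of_injOn
      intro a ha a' ha' hEq
      rw [Sym2.eq_iff] at hEq
      rcases hEq with ⟨_, h⟩ | ⟨h1, h2⟩
      · exact h
      · exact absurd h2.symm (G.ne_of_adj ha.1)
    have hsub : ∀ z ∈ T, ((fun w => s(z, w)) '' (G.neighborSet z \ T)) ⊆ K := by
      rintro z hz e ⟨w, hw, rfl⟩
      exact hK z hz w hw.1 hw.2
    have hdisj : Disjoint ((fun w => s(x, w)) '' (G.neighborSet x \ T))
        ((fun w => s(x', w)) '' (G.neighborSet x' \ T)) := by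
      rw [Set.disjoint_left]
      rintro e ⟨w, hw, rfl⟩ ⟨w', hw', hEq⟩
      rw [Sym2.eq_iff] at hEq
      rcases hEq with ⟨h1, h2⟩ | ⟨h1, h2⟩
      · exact hne (h1.symm)
      · exact hw'.2 (h2 ▸ hx)
    have hunion : ((fun w => s(x, w)) '' (G.neighborSet x \ T) ∪
        (fun w => s(x', w)) '' (G.neighborSet x' \ T)) ⊆ K :=
      Set.union_subset (hsub x hx) (hsub x' hx')
    have h4 : 4 ≤ K.ncard := by
      have := Set.ncard_le_ncard hunion K.toFinite
      rw [Set.ncard_union_eq hdisj (Set.toFinite _) (Set.toFinite _)] at this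
      rw [himg x hx, himg x' hx'] at this
      omega
    omega
  -- choose the bad vertex (or anything)
  have hTne : T.Nonempty := by
    rcases Set.nonempty_of_ncard_ne_zero (by omega : T.ncard ≠ 0) with ⟨z, hz⟩
    exact ⟨z, hz⟩
  obtain ⟨b, hbT, hb⟩ : ∃ b ∈ T, ∀ x ∈ T, x ≠ b → (G.neighborSet x \ T).ncard ≤ 1 := by
    by_cases hex : ∃ z ∈ T, 2 ≤ (G.neighborSet z \ T).ncard
    · obtain ⟨z, hz, h2⟩ := hex
      exact ⟨z, hz, fun x hx hxz => by
        by_contra hcon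
        exact hxz (hbad x hx z hz (by omega) h2)⟩
    · push_neg at hex
      exact ⟨hTne.choose, hTne.choose_spec, fun x hx _ => by
        have := hex x hx; omega⟩
  -- all other vertices have induced degree ≥ 2
  have hdeg : ∀ x ∈ T, x ≠ b → 2 ≤ (G.neighborSet x ∩ T).ncard := by
    intro x hx hxb
    have h1 := hb x hx hxb
    have hsplit : G.neighborSet x = (G.neighborSet x ∩ T) ∪ (G.neighborSet x \ T) := by
      rw [Set.inter_union_diff]
    have := hcubic x
    rw [hsplit, Set.ncard_union_eq (Set.disjoint_of_subset_left (Set.inter_subset_right)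
      Set.disjoint_sdiff_right) (Set.toFinite _) (Set.toFinite _)] at this
    omega
  -- transfer to induced graph
  have hdeg' : ∀ x : ↥T, (x : V) ≠ b → 2 ≤ ((G.induce T).neighborSet x).ncard := by
    intro x hxb
    have himg : Subtype.val '' ((G.induce T).neighborSet x) = G.neighborSet (x : V) ∩ T := by
      ext w
      constructor
      · rintro ⟨w', hw', rfl⟩
        exact ⟨hw', w'.2⟩
      · rintro ⟨hw, hwT⟩
        exact ⟨⟨w, hwT⟩, hw, rfl⟩
    have := hdeg (x : V) x.2 hxb
    rw [← himg, Set.ncard_image_of_injective _ Subtype.val_injective] at this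
    exact this
  obtain ⟨y, hyT, hyb⟩ := Set.exists_ne_of_one_lt_ncard (by omega : 1 < T.ncard) b
  exact not_acyclic_of_almost_min_degree_two (G.induce T) ⟨b, hbT⟩
    (fun x hx => hdeg' x (fun h => hx (Subtype.ext h))) ⟨y, hyT⟩
    (fun h => hyb (congrArg Subtype.val h))


lemma cut_le_three {V : Type*} [Fintype V] (G : SimpleGraph V) (u v α β γ δ x y : V)
    (hNu : G.neighborSet u = {v, α, γ}) (hNv : G.neighborSet v = {u, β, δ})
    (hβαγ : β ≠ α ∧ β ≠ γ) (hδαγ : δ ≠ α ∧ δ ≠ γ)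
    (C D : Set V)
    (hcover : ∀ w : V, w ∉ C → w ∉ ({u, v} : Set V) → w ∈ D)
    (hcross : ∀ a b : V, G.Adj a b → a ∈ C → b ∈ D → s(a, b) = s(x, y))
    (hQD : (({α, β, γ, δ} : Set V) ∩ D).ncard ≤ 2) :
    ({e ∈ G.edgeSet | ∃ a b : V, e = s(a, b) ∧ a ∈ C ∪ {u, v} ∧ b ∉ C ∪ {u, v}}).ncard ≤ 3 := by
  classical
  set f : V → Sym2 V := fun w => if w = α ∨ w = γ then s(u, w) else s(v, w) with hf
  have hsub : {e ∈ G.edgeSet | ∃ a b : V, e = s(a, b) ∧ a ∈ C ∪ {u, v} ∧ b ∉ C ∪ {u, v}}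
      ⊆ insert s(x, y) (f '' (({α, β, γ, δ} : Set V) ∩ D)) := by
    rintro e ⟨he, a, b, rfl, ha, hb⟩
    have hbuv : b ∉ ({u, v} : Set V) := fun h => hb (Or.inr h)
    have hbC : b ∉ C := fun h => hb (Or.inl h)
    have hbD : b ∈ D := hcover b hbC hbuv
    have hadj : G.Adj a b := (G.mem_edgeSet).1 he
    rcases ha with haC | hauv
    · exact Set.mem_insert_iff.2 (Or.inl (hcross a b hadj haC hbD))
    · rcases hauv with rfl | rfl
      · -- a = u
        have hbN : b ∈ ({v, α, γ} : Set V) := by rw [← hNu]; exact hadj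
        have hbv : b ≠ v := fun h => hbuv (Or.inr h)
        have hbag : b = α ∨ b = γ := by
          rcases hbN with h | h | h
          · exact absurd h hbv
          · exact Or.inl h
          · exact Or.inr h
        refine Set.mem_insert_iff.2 (Or.inr ⟨b, ⟨?_, hbD⟩, ?_⟩)
        · rcases hbag with rfl | rfl
          · exact Or.inl rfl
          · exact Or.inr (Or.inr (Or.inl rfl))
        · rw [hf]; simp only [if_pos hbag]
      · -- a = v
        have hbN : b ∈ ({u, β, δ} : Set V) := by rw [← hNv]; exact hadj
        have hbu : b ≠ u := fun h => hbuv (Or.inl h)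
        have hbag : b = β ∨ b = δ := by
          rcases hbN with h | h | h
          · exact absurd h hbu
          · exact Or.inl h
          · exact Or.inr h
        have hnot : ¬ (b = α ∨ b = γ) := by
          rcases hbag with rfl | rfl
          · rintro (h | h); exacts [hβαγ.1 h, hβαγ.2 h]
          · rintro (h | h); exacts [hδαγ.1 h, hδαγ.2 h]
        refine Set.mem_insert_iff.2 (Or.inr ⟨b, ⟨?_, hbD⟩, ?_⟩)
        · rcases hbag with rfl | rfl
          · exact Or.inr (Or.inl rfl)
          · exact Or.inr (Or.inr (Or.inr rfl))
        · rw [hf]; simp only [if_neg hnot]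
  calc ({e ∈ G.edgeSet | ∃ a b : V, e = s(a, b) ∧ a ∈ C ∪ {u, v} ∧ b ∉ C ∪ {u, v}}).ncard
      ≤ (insert s(x, y) (f '' (({α, β, γ, δ} : Set V) ∩ D))).ncard :=
        Set.ncard_le_ncard hsub (Set.toFinite _)
    _ ≤ (f '' (({α, β, γ, δ} : Set V) ∩ D)).ncard + 1 := Set.ncard_insert_le _ _
    _ ≤ (({α, β, γ, δ} : Set V) ∩ D).ncard + 1 := by
        have := Set.ncard_image_le (f := f) (s := (({α, β, γ, δ} : Set V) ∩ D)) (Set.toFinite _)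
        omega
    _ ≤ 3 := by omega


/-- If `G` is a cyclically 4-edge-connected cubic graph (every edge-cut leaving a circuit
on both sides has at least 4 edges) and `G'` is obtained from `G` by an
`(αβ:γδ)_{uv}`-reduction — deleting the adjacent vertices `u, v`, where `α, γ` are the
other neighbours of `u` and `β, δ` the other neighbours of `v`, and adding the edges
`αβ` and `γδ` — then `G'` is bridgeless. -/
theorem reduction_of_cyclically_four_connected_is_bridgeless {V : Type*} [Fintype V]
    (G : SimpleGraph V)
    (hcubic : ∀ w : V, (G.neighborSet w).ncard = 3)
    (hcyc4 : ∀ S : Set V, ¬ (G.induce S).IsAcyclic → ¬ (G.induce Sᶜ).IsAcyclic →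
      4 ≤ ({e ∈ G.edgeSet | ∃ a b : V, e = s(a, b) ∧ a ∈ S ∧ b ∉ S}).ncard)
    (u v α β γ δ : V) (huv : G.Adj u v)
    (hNu : G.neighborSet u = {v, α, γ}) (hNv : G.neighborSet v = {u, β, δ})
    (hαβ : α ≠ β) (hαγ : α ≠ γ) (hαδ : α ≠ δ) (hβγ : β ≠ γ) (hβδ : β ≠ δ) (hγδ : γ ≠ δ)
    (hαS : α ∈ ({u, v}ᶜ : Set V)) (hβS : β ∈ ({u, v}ᶜ : Set V))
    (hγS : γ ∈ ({u, v}ᶜ : Set V)) (hδS : δ ∈ ({u, v}ᶜ : Set V)) :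
    ∀ e : Sym2 ↥({u, v}ᶜ : Set V),
      ¬ (G.induce ({u, v}ᶜ : Set V) ⊔
          fromEdgeSet {s((⟨α, hαS⟩ : ↥({u, v}ᶜ : Set V)), ⟨β, hβS⟩),
                       s((⟨γ, hγS⟩ : ↥({u, v}ᶜ : Set V)), ⟨δ, hδS⟩)}).IsBridge e := by
  classical
  set U : Set V := ({u, v}ᶜ : Set V) with hU
  set G' : SimpleGraph ↥U := (G.induce U ⊔
      fromEdgeSet {s((⟨α, hαS⟩ : ↥U), ⟨β, hβS⟩), s((⟨γ, hγS⟩ : ↥U), ⟨δ, hδS⟩)}) with hG'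
  intro e
  induction e using Sym2.ind with
  | _ xb yb =>
  intro hbr
  rw [isBridge_iff] at hbr
  have hnr := hbr
  set x : V := (xb : V) with hx
  set y : V := (yb : V) with hy
  -- basic membership facts
  have hmemU : ∀ w : V, w ∈ U ↔ (w ≠ u ∧ w ≠ v) := by
    intro w
    simp [hU, Set.mem_compl_iff, Set.mem_insert_iff, Set.mem_singleton_iff, not_or]
  have hxU : x ∈ U := xb.2
  have hyU : y ∈ U := yb.2
  -- the graph with the bridge removed
  set H : SimpleGraph ↥U := G' \ fromEdgeSet {s(xb, yb)} with hH
  -- the set of vertices reachable from yb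
  set Bsub : Set ↥U := {w | H.Reachable yb w} with hBsub
  have hclosed : ∀ p q : ↥U, G'.Adj p q → s(p, q) ≠ s(xb, yb) → q ∈ Bsub → p ∈ Bsub := by
    intro p q hpq hne hq
    have hHadj : H.Adj q p := by
      rw [hH, sdiff_adj]
      refine ⟨hpq.symm, ?_⟩
      rw [fromEdgeSet_adj]
      rintro ⟨hmem, -⟩
      rw [Set.mem_singleton_iff] at hmem
      exact hne ((Sym2.eq_swap (a := p) (b := q)).trans hmem)
    exact hq.trans hHadj.reachable
  set B : Set V := Subtype.val '' Bsub with hB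
  set A : Set V := U \ B with hA
  have hBU : B ⊆ U := by rintro w ⟨q, hq, rfl⟩; exact q.2
  have hcoverU : ∀ w : V, w ∈ U → w ∈ A ∨ w ∈ B := by
    intro w hw
    by_cases hwB : w ∈ B
    · exact Or.inr hwB
    · exact Or.inl ⟨hw, hwB⟩
  have hdisjAB : ∀ w : V, w ∈ A → w ∈ B → False := fun w hwA hwB => hwA.2 hwB
  have hyB : y ∈ B := ⟨yb, Reachable.refl yb, rfl⟩
  have hxA : x ∈ A := by
    refine ⟨hxU, ?_⟩
    rintro ⟨q, hq, hqx⟩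
    exact hnr ((show q = xb from Subtype.ext hqx) ▸ hq).symm
  -- crossing edges of G' must be the bridge
  have keyG' : ∀ p q : ↥U, G'.Adj p q → (p : V) ∈ A → (q : V) ∈ B →
      s((p : V), (q : V)) = s(x, y) := by
    intro p q hpq hpA hqB
    have hqBsub : q ∈ Bsub := by
      obtain ⟨q', hq', hq'q⟩ := hqB
      exact (show q' = q from Subtype.ext hq'q) ▸ hq'
    by_cases hE : s(p, q) = s(xb, yb)
    · rw [Sym2.eq_iff] at hE
      rcases hE with ⟨h1, h2⟩ | ⟨h1, h2⟩
      · rw [Sym2.eq_iff]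
        exact Or.inl ⟨congrArg Subtype.val h1, congrArg Subtype.val h2⟩
      · rw [Sym2.eq_iff]
        exact Or.inr ⟨congrArg Subtype.val h1, congrArg Subtype.val h2⟩
    · exact absurd (hclosed p q hpq hE hqBsub) (fun h => hdisjAB _ hpA ⟨p, h, rfl⟩)
  have key3 : ∀ a b : V, G.Adj a b → a ∈ A → b ∈ B → s(a, b) = s(x, y) := by
    intro a b hab haA hbB
    have haU : a ∈ U := haA.1
    have hbU : b ∈ U := hBU hbB
    have hpq : G'.Adj ⟨a, haU⟩ ⟨b, hbU⟩ := by
      rw [hG', sup_adj]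
      exact Or.inl hab
    exact keyG' ⟨a, haU⟩ ⟨b, hbU⟩ hpq haA hbB
  -- if a vertex of U is adjacent in G to both u and v, contradiction
  have noUV : ∀ z : V, z ∈ U → u ∈ G.neighborSet z → v ∈ G.neighborSet z → False := by
    intro z hz h1 h2
    have hzuv := (hmemU z).1 hz
    have hz1 : z ∈ G.neighborSet u := ((G.adj_symm h1) : G.Adj u z)
    have hz2 : z ∈ G.neighborSet v := ((G.adj_symm h2) : G.Adj v z)
    rw [hNu] at hz1
    rw [hNv] at hz2
    simp only [Set.mem_insert_iff, Set.mem_singleton_iff] at hz1 hz2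
    rcases hz1 with h | h | h
    · exact hzuv.2 h
    all_goals rcases hz2 with h' | h' | h'
    · exact hzuv.1 h'
    · exact hαβ (h.symm.trans h')
    · exact hαδ (h.symm.trans h')
    · exact hzuv.1 h'
    · exact hβγ (h'.symm.trans h)
    · exact hγδ (h.symm.trans h')
  -- both sides have at least two vertices
  have hxy : x ≠ y := by
    intro h
    rw [hx, hy] at h
    have hxyb : xb = yb := Subtype.ext h
    subst hxyb
    exact hnr (Reachable.refl _)
  have hcard3 : ∀ z : V, ({u, v, z} : Set V).ncard ≤ 3 := by
    intro z
    calc ({u, v, z} : Set V).ncard ≤ ({v, z} : Set V).ncard + 1 := Set.ncard_insert_le _ _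
      _ ≤ (({z} : Set V).ncard + 1) + 1 := by
          have := Set.ncard_insert_le v ({z} : Set V)
          omega
      _ ≤ 3 := by rw [Set.ncard_singleton]
  have hB2 : 2 ≤ B.ncard := by
    by_contra hcon
    push_neg at hcon
    have hBy : B = {y} := by
      have hpos : 0 < B.ncard := (Set.ncard_pos (Set.toFinite _)).2 ⟨y, hyB⟩
      obtain ⟨z, hz⟩ := Set.ncard_eq_one.1 (by omega : B.ncard = 1)
      rw [hz] at hyB ⊢
      rw [Set.mem_singleton_iff] at hyB
      rw [hyB]
    have hNy : G.neighborSet y ⊆ {u, v, x} := by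
      intro w hw
      have hwadj : G.Adj y w := hw
      by_cases hwuv : w ∈ U
      · rcases hcoverU w hwuv with hwA | hwB
        · have := key3 w y hwadj.symm hwA hyB
          rw [Sym2.eq_iff] at this
          rcases this with ⟨h1, h2⟩ | ⟨h1, h2⟩
          · exact Or.inr (Or.inr h1)
          · exact absurd h1.symm (G.ne_of_adj hwadj)
        · rw [hBy, Set.mem_singleton_iff] at hwB
          exact absurd hwB.symm (G.ne_of_adj hwadj)
      · have := (hmemU w)
        rcases not_and_or.1 (fun hc => hwuv ((hmemU w).2 hc)) with h | h
        · push_neg at h; exact Or.inl h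
        · push_neg at h; exact Or.inr (Or.inl h)
    have heq : G.neighborSet y = {u, v, x} :=
      Set.eq_of_subset_of_ncard_le hNy (by rw [hcubic y]; exact hcard3 x) (Set.toFinite _)
    exact noUV y hyU (heq ▸ (by simp : u ∈ ({u, v, x} : Set V)))
      (heq ▸ (by simp : v ∈ ({u, v, x} : Set V)))
  have hA2 : 2 ≤ A.ncard := by
    by_contra hcon
    push_neg at hcon
    have hAx : A = {x} := by
      have hpos : 0 < A.ncard := (Set.ncard_pos (Set.toFinite _)).2 ⟨x, hxA⟩
      obtain ⟨z, hz⟩ := Set.ncard_eq_one.1 (by omega : A.ncard = 1)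
      rw [hz] at hxA ⊢
      rw [Set.mem_singleton_iff] at hxA
      rw [hxA]
    have hNx : G.neighborSet x ⊆ {u, v, y} := by
      intro w hw
      have hwadj : G.Adj x w := hw
      by_cases hwuv : w ∈ U
      · rcases hcoverU w hwuv with hwA | hwB
        · rw [hAx, Set.mem_singleton_iff] at hwA
          exact absurd hwA.symm (G.ne_of_adj hwadj)
        · have := key3 x w hwadj hxA hwB
          rw [Sym2.eq_iff] at this
          rcases this with ⟨h1, h2⟩ | ⟨h1, h2⟩
          · exact Or.inr (Or.inr h2)
          · exact absurd h1 hxy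
      · rcases not_and_or.1 (fun hc => hwuv ((hmemU w).2 hc)) with h | h
        · push_neg at h; exact Or.inl h
        · push_neg at h; exact Or.inr (Or.inl h)
    have heq : G.neighborSet x = {u, v, y} :=
      Set.eq_of_subset_of_ncard_le hNx (by rw [hcubic x]; exact hcard3 y) (Set.toFinite _)
    exact noUV x hxU (heq ▸ (by simp : u ∈ ({u, v, y} : Set V)))
      (heq ▸ (by simp : v ∈ ({u, v, y} : Set V)))
  -- the four special vertices split between A and B
  have hQsplit : (({α, β, γ, δ} : Set V) ∩ A).ncard + (({α, β, γ, δ} : Set V) ∩ B).ncard = 4 := by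
    have hQU : ({α, β, γ, δ} : Set V) ⊆ U := by
      intro w hw
      simp only [Set.mem_insert_iff, Set.mem_singleton_iff] at hw
      rcases hw with rfl | rfl | rfl | rfl
      exacts [hαS, hβS, hγS, hδS]
    have hcup : (({α, β, γ, δ} : Set V) ∩ A) ∪ (({α, β, γ, δ} : Set V) ∩ B)
        = ({α, β, γ, δ} : Set V) := by
      ext w
      constructor
      · rintro (h | h)
        exacts [h.1, h.1]
      · intro hw
        rcases hcoverU w (hQU hw) with h | h
        exacts [Or.inl ⟨hw, h⟩, Or.inr ⟨hw, h⟩]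
    have hdisj : Disjoint (({α, β, γ, δ} : Set V) ∩ A) (({α, β, γ, δ} : Set V) ∩ B) := by
      rw [Set.disjoint_left]
      rintro w ⟨-, hwA⟩ ⟨-, hwB⟩
      exact hdisjAB w hwA hwB
    have hQ4 : ({α, β, γ, δ} : Set V).ncard = 4 := by
      rw [Set.ncard_insert_of_notMem (by simp [hαβ, hαγ, hαδ]),
        Set.ncard_insert_of_notMem (by simp [hβγ, hβδ]),
        Set.ncard_insert_of_notMem (by simp [hγδ]), Set.ncard_singleton]
    rw [← Set.ncard_union_eq hdisj (Set.toFinite _) (Set.toFinite _), hcup, hQ4]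
  -- membership helpers for sides
  have hmemuv : ∀ w : V, w ∈ U → w ∉ ({u, v} : Set V) := by
    intro w hw hmem
    have := (hmemU w).1 hw
    simp only [Set.mem_insert_iff, Set.mem_singleton_iff] at hmem
    rcases hmem with h | h
    · exact this.1 h
    · exact this.2 h
  have hmemuv' : ∀ w : V, w ∉ ({u, v} : Set V) → w ∈ U := by
    intro w hw
    rw [hmemU w]
    exact ⟨fun h => hw (by simp [h]), fun h => hw (by simp [h])⟩
  rcases le_or_gt ((({α, β, γ, δ} : Set V) ∩ B).ncard) 2 with ht | ht
  · -- use the side S = A ∪ {u, v}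
    have hcover' : ∀ w : V, w ∉ A → w ∉ ({u, v} : Set V) → w ∈ B := by
      intro w hwA hwuv
      rcases hcoverU w (hmemuv' w hwuv) with h | h
      · exact absurd h hwA
      · exact h
    have hcut := cut_le_three G u v α β γ δ x y hNu hNv ⟨hαβ.symm, hβγ⟩ ⟨hαδ.symm, hγδ.symm⟩
      A B hcover' key3 ht
    have hnotSB : ∀ w : V, w ∈ B → w ∉ A ∪ ({u, v} : Set V) := by
      rintro w hwB (h | h)
      · exact hdisjAB w h hwB
      · exact hmemuv w (hBU hwB) h
    have hK1 : ∀ z ∈ A ∪ ({u, v} : Set V), ∀ w : V, G.Adj z w → w ∉ A ∪ ({u, v} : Set V) →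
        s(z, w) ∈ {e ∈ G.edgeSet | ∃ a b : V, e = s(a, b) ∧ a ∈ A ∪ ({u, v} : Set V) ∧
          b ∉ A ∪ ({u, v} : Set V)} :=
      fun z hz w hzw hw => ⟨(G.mem_edgeSet).2 hzw, z, w, rfl, hz, hw⟩
    have hK2 : ∀ z ∈ B, ∀ w : V, G.Adj z w → w ∉ B →
        s(z, w) ∈ {e ∈ G.edgeSet | ∃ a b : V, e = s(a, b) ∧ a ∈ A ∪ ({u, v} : Set V) ∧
          b ∉ A ∪ ({u, v} : Set V)} := by
      intro z hz w hzw hw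
      have hwS : w ∈ A ∪ ({u, v} : Set V) := by
        by_cases hwuv : w ∈ ({u, v} : Set V)
        · exact Or.inr hwuv
        · rcases hcoverU w (hmemuv' w hwuv) with h | h
          · exact Or.inl h
          · exact absurd h hw
      exact ⟨(G.mem_edgeSet).2 hzw, w, z, Sym2.eq_swap, hwS, hnotSB z hz⟩
    have hS2 : 2 ≤ (A ∪ ({u, v} : Set V)).ncard := by
      have h1 := Set.ncard_le_ncard
        (Set.subset_union_right : ({u, v} : Set V) ⊆ A ∪ {u, v}) (Set.toFinite _)
      rw [Set.ncard_pair huv.ne] at h1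
      exact h1
    have hnot1 := side_not_acyclic G hcubic (A ∪ ({u, v} : Set V)) _ hK1 hcut hS2
    have hnot2' := side_not_acyclic G hcubic B _ hK2 hcut hB2
    have hcomp : (A ∪ ({u, v} : Set V))ᶜ = B := by
      ext w
      simp only [Set.mem_compl_iff, Set.mem_union, not_or]
      constructor
      · intro hw
        exact hcover' w hw.1 hw.2
      · intro hwB
        exact ⟨fun h => hdisjAB w h hwB, hmemuv w (hBU hwB)⟩
    have hnot2 : ¬ (G.induce ((A ∪ ({u, v} : Set V))ᶜ)).IsAcyclic := by
      rw [hcomp]; exact hnot2'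
    have h4 := hcyc4 (A ∪ ({u, v} : Set V)) hnot1 hnot2
    omega
  · -- use the side S = B ∪ {u, v}
    have hQA : (({α, β, γ, δ} : Set V) ∩ A).ncard ≤ 2 := by omega
    have hAU : A ⊆ U := fun w hw => hw.1
    have hcover' : ∀ w : V, w ∉ B → w ∉ ({u, v} : Set V) → w ∈ A := by
      intro w hwB hwuv
      rcases hcoverU w (hmemuv' w hwuv) with h | h
      · exact h
      · exact absurd h hwB
    have hcross2 : ∀ a b : V, G.Adj a b → a ∈ B → b ∈ A → s(a, b) = s(x, y) := by
      intro a b hab haB hbA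
      exact (Sym2.eq_swap).trans (key3 b a hab.symm hbA haB)
    have hcut := cut_le_three G u v α β γ δ x y hNu hNv ⟨hαβ.symm, hβγ⟩ ⟨hαδ.symm, hγδ.symm⟩
      B A hcover' hcross2 hQA
    have hnotSA : ∀ w : V, w ∈ A → w ∉ B ∪ ({u, v} : Set V) := by
      rintro w hwA (h | h)
      · exact hdisjAB w hwA h
      · exact hmemuv w (hAU hwA) h
    have hK1 : ∀ z ∈ B ∪ ({u, v} : Set V), ∀ w : V, G.Adj z w → w ∉ B ∪ ({u, v} : Set V) →
        s(z, w) ∈ {e ∈ G.edgeSet | ∃ a b : V, e = s(a, b) ∧ a ∈ B ∪ ({u, v} : Set V) ∧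
          b ∉ B ∪ ({u, v} : Set V)} :=
      fun z hz w hzw hw => ⟨(G.mem_edgeSet).2 hzw, z, w, rfl, hz, hw⟩
    have hK2 : ∀ z ∈ A, ∀ w : V, G.Adj z w → w ∉ A →
        s(z, w) ∈ {e ∈ G.edgeSet | ∃ a b : V, e = s(a, b) ∧ a ∈ B ∪ ({u, v} : Set V) ∧
          b ∉ B ∪ ({u, v} : Set V)} := by
      intro z hz w hzw hw
      have hwS : w ∈ B ∪ ({u, v} : Set V) := by
        by_cases hwuv : w ∈ ({u, v} : Set V)
        · exact Or.inr hwuv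
        · rcases hcoverU w (hmemuv' w hwuv) with h | h
          · exact absurd h hw
          · exact Or.inl h
      exact ⟨(G.mem_edgeSet).2 hzw, w, z, Sym2.eq_swap, hwS, hnotSA z hz⟩
    have hS2 : 2 ≤ (B ∪ ({u, v} : Set V)).ncard := by
      have h1 := Set.ncard_le_ncard
        (Set.subset_union_right : ({u, v} : Set V) ⊆ B ∪ {u, v}) (Set.toFinite _)
      rw [Set.ncard_pair huv.ne] at h1
      exact h1
    have hnot1 := side_not_acyclic G hcubic (B ∪ ({u, v} : Set V)) _ hK1 hcut hS2
    have hnot2' := side_not_acyclic G hcubic A _ hK2 hcut hA2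
    have hcomp : (B ∪ ({u, v} : Set V))ᶜ = A := by
      ext w
      simp only [Set.mem_compl_iff, Set.mem_union, not_or]
      constructor
      · intro hw
        exact hcover' w hw.1 hw.2
      · intro hwA
        exact ⟨fun h => hdisjAB w hwA h, hmemuv w (hAU hwA)⟩
    have hnot2 : ¬ (G.induce ((B ∪ ({u, v} : Set V))ᶜ)).IsAcyclic := by
      rw [hcomp]; exact hnot2'
    have h4 := hcyc4 (B ∪ ({u, v} : Set V)) hnot1 hnot2
    omega
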